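/- Consider the projector-splitting decomposition P_Y = P₁⁺ − P₁⁻ + P₂⁺ on ℝ^{n×m}, where P₁⁺ Z = Z(:,J) V(J,:)^{-T} V^T, P₁⁻ Z = U U(I,:)^{-1} Z(I,J) V(J,:)^{-T} V^T, and P₂⁺ Z = U U(I,:)^{-1} Z(I,:). Then each of P₁⁺, P₁⁻, P₂⁺ is individually idempotent, and P₁⁻ = P₂⁺ ∘ P₁⁺ = P₁⁺ ∘ P₂⁺. -/
import Mathlib


open Matrix

/-- `P₁⁺ Z = Z(:,J) V(J,:)⁻ᵀ Vᵀ`. -/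
noncomputable def P1p {n m r : ℕ} (V : Matrix (Fin m) (Fin r) ℝ)
    (h : Fin r → Fin m) (Z : Matrix (Fin n) (Fin m) ℝ) : Matrix (Fin n) (Fin m) ℝ :=
  Z.submatrix id h * ((V.submatrix h id)ᵀ)⁻¹ * Vᵀ

/-- `P₁⁻ Z = U U(I,:)⁻¹ Z(I,J) V(J,:)⁻ᵀ Vᵀ`. -/
noncomputable def P1m {n m r : ℕ} (U : Matrix (Fin n) (Fin r) ℝ)
    (V : Matrix (Fin m) (Fin r) ℝ) (g : Fin r → Fin n) (h : Fin r → Fin m)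
    (Z : Matrix (Fin n) (Fin m) ℝ) : Matrix (Fin n) (Fin m) ℝ :=
  U * (U.submatrix g id)⁻¹ * Z.submatrix g h * ((V.submatrix h id)ᵀ)⁻¹ * Vᵀ

/-- `P₂⁺ Z = U U(I,:)⁻¹ Z(I,:)`. -/
noncomputable def P2p {n m r : ℕ} (U : Matrix (Fin n) (Fin r) ℝ)
    (g : Fin r → Fin n) (Z : Matrix (Fin n) (Fin m) ℝ) : Matrix (Fin n) (Fin m) ℝ :=
  U * (U.submatrix g id)⁻¹ * Z.submatrix g id


lemma mySub_mul_left {n m p q : ℕ} (A : Matrix (Fin n) (Fin m) ℝ)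
    (B : Matrix (Fin m) (Fin p) ℝ) (f : Fin q → Fin n) :
    (A * B).submatrix f id = A.submatrix f id * B := by
  ext i j; simp [Matrix.mul_apply]

lemma mySub_mul_right {n m p q : ℕ} (A : Matrix (Fin n) (Fin m) ℝ)
    (B : Matrix (Fin m) (Fin p) ℝ) (f : Fin q → Fin p) :
    (A * B).submatrix id f = A * B.submatrix id f := by
  ext i j; simp [Matrix.mul_apply]

/-- In the projector-splitting decomposition `P_Y = P₁⁺ − P₁⁻ + P₂⁺`, each of
`P₁⁺`, `P₁⁻`, `P₂⁺` is idempotent, and `P₁⁻ = P₂⁺ ∘ P₁⁺ = P₁⁺ ∘ P₂⁺`. -/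
theorem projector_splitting_terms
    {n m r : ℕ}
    (U : Matrix (Fin n) (Fin r) ℝ) (V : Matrix (Fin m) (Fin r) ℝ)
    (hU : Uᵀ * U = 1) (hV : Vᵀ * V = 1)
    (g : Fin r → Fin n) (hg : Function.Injective g)
    (h : Fin r → Fin m) (hh : Function.Injective h)
    (hUg : IsUnit (U.submatrix g id)) (hVh : IsUnit (V.submatrix h id)) :
    (∀ Z : Matrix (Fin n) (Fin m) ℝ, P1p V h (P1p V h Z) = P1p V h Z) ∧
    (∀ Z : Matrix (Fin n) (Fin m) ℝ, P1m U V g h (P1m U V g h Z) = P1m U V g h Z) ∧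
    (∀ Z : Matrix (Fin n) (Fin m) ℝ, P2p U g (P2p U g Z) = P2p U g Z) ∧
    (∀ Z : Matrix (Fin n) (Fin m) ℝ, P1m U V g h Z = P2p U g (P1p V h Z)) ∧
    (∀ Z : Matrix (Fin n) (Fin m) ℝ, P1m U V g h Z = P1p V h (P2p U g Z)) := by
  obtain ⟨dU, hdU⟩ : IsUnit (U.submatrix g id).det := (Matrix.isUnit_iff_isUnit_det _).mp hUg
  have hAinv : U.submatrix g id * (U.submatrix g id)⁻¹ = 1 :=
    Matrix.mul_nonsing_inv _ ⟨dU, hdU⟩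
  have hBdet : IsUnit ((V.submatrix h id)ᵀ).det := by
    rw [Matrix.det_transpose]; exact (Matrix.isUnit_iff_isUnit_det _).mp hVh
  have hBinv : ((V.submatrix h id)ᵀ)⁻¹ * (V.submatrix h id)ᵀ = 1 :=
    Matrix.nonsing_inv_mul _ hBdet
  have hVsub : Vᵀ.submatrix (id : Fin r → Fin r) h = (V.submatrix h id)ᵀ := by
    ext i j; rfl
  have hUsub : (U.submatrix g id).submatrix (id : Fin r → Fin r) (id : Fin r → Fin r)
      = U.submatrix g id := by ext i j; rfl
  have h1 : ∀ Z : Matrix (Fin n) (Fin m) ℝ, (P1p V h Z).submatrix id h = Z.submatrix id h := by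
    intro Z
    rw [P1p, mySub_mul_right, hVsub, Matrix.mul_assoc, hBinv, Matrix.mul_one]
  have h2 : ∀ Z : Matrix (Fin n) (Fin m) ℝ, (P2p U g Z).submatrix g id = Z.submatrix g id := by
    intro Z
    rw [P2p, mySub_mul_left, mySub_mul_left, hAinv, Matrix.one_mul]
  have mySub_mul_both : ∀ {p q : ℕ} (A : Matrix (Fin n) (Fin r) ℝ)
      (B : Matrix (Fin r) (Fin m) ℝ) (f : Fin p → Fin n) (e : Fin q → Fin m),
      (A * B).submatrix f e = A.submatrix f id * B.submatrix id e := by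
    intro p q A B f e; ext i j; simp [Matrix.mul_apply]
  have h1pgid : ∀ Z : Matrix (Fin n) (Fin m) ℝ,
      (P1p V h Z).submatrix g id = Z.submatrix g h * ((V.submatrix h id)ᵀ)⁻¹ * Vᵀ := by
    intro Z
    rw [P1p, mySub_mul_left, mySub_mul_left]
    simp [Matrix.submatrix_submatrix]
  have h2pidh : ∀ Z : Matrix (Fin n) (Fin m) ℝ,
      (P2p U g Z).submatrix id h = U * (U.submatrix g id)⁻¹ * Z.submatrix g h := by
    intro Z
    rw [P2p, mySub_mul_right]
    simp [Matrix.submatrix_submatrix]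
  have h1mgh : ∀ Z : Matrix (Fin n) (Fin m) ℝ,
      (P1m U V g h Z).submatrix g h = Z.submatrix g h := by
    intro Z
    rw [P1m, mySub_mul_both, hVsub, mySub_mul_left, mySub_mul_left, mySub_mul_left, hAinv,
      Matrix.one_mul, Matrix.mul_assoc, hBinv, Matrix.mul_one]
  refine ⟨?_, ?_, ?_, ?_, ?_⟩
  · intro Z; rw [P1p, h1, P1p]
  · intro Z; rw [P1m, h1mgh, P1m]
  · intro Z; rw [P2p, h2, P2p]
  · intro Z
    rw [P2p, h1pgid, P1m]
    simp only [Matrix.mul_assoc]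
  · intro Z
    rw [P1p, h2pidh, P1m]
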